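/- Let C be a groupoid carrying an inner action α of a group G with source function σ, and equip C with the induced G-action: g•x := σ(g⁻¹, x) on objects and g•m := α(g⁻¹, x) ≫ m ≫ (α(g⁻¹, y))⁻¹ for a morphism m : x ⟶ y. Form the category C^{×G} from this action. Then the assignment that is the identity on objects and sends a morphism (g, m) : a → b of C^{×G} (so m : g•a ⟶ b in C) to the morphism α(g, g•a) ≫ m : a ⟶ b of C is a functor ι^{×G} : C^{×G} ⥤ C; here α(g, g•a) is a morphism a ⟶ g•a because σ(g, σ(g⁻¹, a)) = a. This functor sends each morphism of the form (1, m) to m. -/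

import Mathlib

open CategoryTheory

universe w v u

/-- Morphisms from `a` to `b` in the category `C^{×G}` associated to an action of `G`
on `C` with action `φ` on objects: pairs `(g, m)` with `m : φ g a ⟶ b`. -/
def GProdHom {C : Type u} [Category.{v} C] {G : Type w} (φ : G → C → C) (a b : C) :=
  Σ g : G, (φ g a ⟶ b)

/-- The identity morphism `(1, 𝟙 a)` of `C^{×G}`. -/
def gprodId {C : Type u} [Category.{v} C] {G : Type w} [Group G]
    (φ : G → C → C) (hφone : ∀ x : C, φ 1 x = x) (a : C) : GProdHom φ a a :=
  ⟨1, eqToHom (hφone a)⟩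

/-- The composite in `C^{×G}` of `(g, m) : a → b` followed by `(h, m') : b → c`. -/
def gprodComp {C : Type u} [Category.{v} C] {G : Type w} [Group G]
    (φ : G → C → C) (ψ : ∀ (g : G) {x y : C}, (x ⟶ y) → (φ g x ⟶ φ g y))
    (hφmul : ∀ (g h : G) (x : C), φ (g * h) x = φ g (φ h x))
    {a b c : C} (f₁ : GProdHom φ a b) (f₂ : GProdHom φ b c) : GProdHom φ a c :=
  ⟨f₂.1 * f₁.1, eqToHom (hφmul f₂.1 f₁.1 a) ≫ ψ f₂.1 f₁.2 ≫ f₂.2⟩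

/-- The action on objects `g • x := σ g⁻¹ x` induced by an inner action with source
function `σ`. -/
def innerφ {C : Type u} {G : Type w} [Group G] (σ : G → C → C) : G → C → C :=
  fun g x => σ g⁻¹ x

/-- The action on morphisms `g • m := α g⁻¹ x ≫ m ≫ (α g⁻¹ y)⁻¹` induced by an inner
action `(σ, α)`. -/
def innerConj {C : Type u} [Groupoid C] {G : Type w} [Group G]
    (σ : G → C → C) (α : ∀ (g : G) (x : C), σ g x ⟶ x)
    (g : G) {x y : C} (m : x ⟶ y) : innerφ σ g x ⟶ innerφ σ g y :=
  α g⁻¹ x ≫ m ≫ Groupoid.inv (α g⁻¹ y)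

theorem innerφ_one {C : Type u} {G : Type w} [Group G] (σ : G → C → C)
    (hσ_one : ∀ x : C, σ 1 x = x) (x : C) : innerφ σ (1 : G) x = x := by
  show σ (1 : G)⁻¹ x = x
  rw [inv_one, hσ_one]

theorem innerφ_mul {C : Type u} {G : Type w} [Group G] (σ : G → C → C)
    (hσ_mul : ∀ (g h : G) (x : C), σ (h * g) x = σ g (σ h x)) (g h : G) (x : C) :
    innerφ σ (g * h) x = innerφ σ g (innerφ σ h x) := by
  show σ (g * h)⁻¹ x = σ g⁻¹ (σ h⁻¹ x)
  rw [mul_inv_rev]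
  exact hσ_mul g⁻¹ h⁻¹ x

/-- The map sending a morphism `(g, m) : a → b` of `C^{×G}` (so `m : g • a ⟶ b`) to
the morphism `α g (g • a) ≫ m : a ⟶ b` of `C`; here `α g (g • a)` is a morphism
`a ⟶ g • a` because `σ g (σ g⁻¹ a) = a`. -/
def iotaG {C : Type u} [Groupoid C] {G : Type w} [Group G]
    (σ : G → C → C) (α : ∀ (g : G) (x : C), σ g x ⟶ x)
    (hσ_one : ∀ x : C, σ 1 x = x)
    (hσ_mul : ∀ (g h : G) (x : C), σ (h * g) x = σ g (σ h x))
    {a b : C} (f : GProdHom (innerφ σ) a b) : a ⟶ b :=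
  eqToHom (show a = σ f.1 (σ f.1⁻¹ a) by
    rw [← hσ_mul f.1 f.1⁻¹ a, inv_mul_cancel, hσ_one]) ≫ α f.1 (σ f.1⁻¹ a) ≫ f.2

/-- Let `C` be a groupoid with an inner action `(σ, α)` of a group
`G`, equipped with the induced `G`-action (`innerφ` on objects, `innerConj` on
morphisms), and form `C^{×G}`.  Then the assignment which is the identity on objects
and sends `(g, m) : a → b` to `α g (g • a) ≫ m : a ⟶ b` is a functor
`ι^{×G} : C^{×G} ⥤ C` (it preserves identities and composition), and it sends each
morphism of the form `(1, m)` to `m`. -/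
theorem stmt_14 {C : Type u} [Groupoid C] {G : Type w} [Group G]
    (σ : G → C → C) (α : ∀ (g : G) (x : C), σ g x ⟶ x)
    (hσ_one : ∀ x : C, σ 1 x = x)
    (hα_one : ∀ x : C, α 1 x = eqToHom (hσ_one x))
    (hσ_mul : ∀ (g h : G) (x : C), σ (h * g) x = σ g (σ h x))
    (hα_mul : ∀ (g h : G) (x : C),
      α (h * g) x = eqToHom (hσ_mul g h x) ≫ α g (σ h x) ≫ α h x) :
    (∀ a : C,
      iotaG σ α hσ_one hσ_mul (gprodId (innerφ σ) (innerφ_one σ hσ_one) a) = 𝟙 a) ∧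
    (∀ (a b c : C) (f₁ : GProdHom (innerφ σ) a b) (f₂ : GProdHom (innerφ σ) b c),
      iotaG σ α hσ_one hσ_mul
          (gprodComp (innerφ σ) (innerConj σ α) (innerφ_mul σ hσ_mul) f₁ f₂) =
        iotaG σ α hσ_one hσ_mul f₁ ≫ iotaG σ α hσ_one hσ_mul f₂) ∧
    (∀ (a b : C) (m : innerφ σ (1 : G) a ⟶ b),
      iotaG σ α hσ_one hσ_mul ⟨(1 : G), m⟩ =
        eqToHom (innerφ_one σ hσ_one a).symm ≫ m) := by
  -- auxiliary facts
  have hσ_cancel : ∀ (g : G) (x : C), σ g (σ g⁻¹ x) = x := fun g x => by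
    rw [← hσ_mul, inv_mul_cancel, hσ_one]
  have hα_eq : ∀ (k : G) (hk : k = 1) (x : C),
      α k x = eqToHom (by rw [hk, hσ_one]) := by
    intro k hk x; subst hk; exact hα_one x
  have hα_congr : ∀ (g : G) {x y : C} (h : x = y),
      α g x = eqToHom (by rw [h]) ≫ α g y ≫ eqToHom h.symm := by
    intro g x y h; subst h; simp
  have hcancel : ∀ (g : G) (x : C),
      α g (σ g⁻¹ x) ≫ α g⁻¹ x = eqToHom (hσ_cancel g x) := by
    intro g x
    have h := hα_mul g g⁻¹ x
    rw [hα_eq (g⁻¹ * g) (inv_mul_cancel g) x] at h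
    calc α g (σ g⁻¹ x) ≫ α g⁻¹ x
        = eqToHom (hσ_mul g g⁻¹ x).symm ≫
            (eqToHom (hσ_mul g g⁻¹ x) ≫ α g (σ g⁻¹ x) ≫ α g⁻¹ x) := by simp
      _ = eqToHom (hσ_mul g g⁻¹ x).symm ≫
            eqToHom (show σ (g⁻¹ * g) x = x by rw [inv_mul_cancel, hσ_one]) := by
          rw [← h]
      _ = eqToHom (hσ_cancel g x) := by simp
  have hinv : ∀ (g : G) (x : C),
      Groupoid.inv (α g⁻¹ x) = eqToHom (hσ_cancel g x).symm ≫ α g (σ g⁻¹ x) := by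
    intro g x
    rw [Groupoid.inv_eq_inv]
    symm
    apply IsIso.eq_inv_of_inv_hom_id
    rw [Category.assoc, hcancel, eqToHom_trans, eqToHom_refl]
  have hcancel' : ∀ (g : G) (x : C) {z : C} (f : x ⟶ z),
      α g (σ g⁻¹ x) ≫ α g⁻¹ x ≫ f = eqToHom (hσ_cancel g x) ≫ f := by
    intro g x z f; rw [← Category.assoc, hcancel]
  refine ⟨?_, ?_, ?_⟩
  · intro a
    simp [iotaG, gprodId, hα_one]
    have key : ∀ {x y : C} (p : a = x) (q : x = y) (r : y = a),
        eqToHom p ≫ eqToHom q ≫ eqToHom r = 𝟙 a := by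
      intro x y p q r; subst p q; simp
    exact key _ _ _
  · rintro a b c ⟨g, m⟩ ⟨h, m'⟩
    have e1 : σ (h * g)⁻¹ a = σ h⁻¹ (σ g⁻¹ a) := by
      rw [mul_inv_rev]; exact hσ_mul h⁻¹ g⁻¹ a
    change σ g⁻¹ a ⟶ b at m
    change σ h⁻¹ b ⟶ c at m'
    show eqToHom (hσ_cancel (h * g) a).symm ≫ α (h * g) (σ (h * g)⁻¹ a) ≫ eqToHom e1 ≫
        (α h⁻¹ (σ g⁻¹ a) ≫ m ≫ Groupoid.inv (α h⁻¹ b)) ≫ m' =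
      (eqToHom (hσ_cancel g a).symm ≫ α g (σ g⁻¹ a) ≫ m) ≫ eqToHom (hσ_cancel h b).symm ≫
        α h (σ h⁻¹ b) ≫ m'
    rw [hα_mul g h (σ (h * g)⁻¹ a), hα_congr h e1,
      hα_congr g (show σ h (σ (h * g)⁻¹ a) = σ g⁻¹ a by rw [e1, hσ_cancel]),
      hinv h b]
    simp only [Category.assoc, eqToHom_trans_assoc, eqToHom_refl, Category.id_comp]
    rw [hcancel' h (σ g⁻¹ a)]
    simp
  · intro a b m
    simp [iotaG, hα_one]
    have key : ∀ {x : C} (p : a = x) (q : x = innerφ σ (1 : G) a) (r : a = innerφ σ (1 : G) a),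
        eqToHom p ≫ eqToHom q ≫ m = eqToHom r ≫ m := by
      intro x p q r; subst p; simp
    exact key _ _ _
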